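/- Suppose P(y, z_c, z_s) > 0 everywhere, the transformation x = S[z_c; z_s] is invertible with inverse T, and under the weight w := P(y, z_c)·P(z_s)/P(y, z_c, z_s) the features are centered (E_w[z_c]=0, E_w[z_s]=0) with invertible marginal second moment matrices Σ_c and Σ_s. Then the minimizer θ*(w) of the weighted population least squares loss E[w·(y − x^⊤θ)²] equals the optimal debiased predictor θ̄ := T^⊤[θ̄_c; 0], where θ̄_c := argmin_{θ_c} E[(y − z_c^⊤ θ_c)²] = Σ_c^{-1} E[z_c y]. In particular, the weighted OLS solution places no weight on the spurious features z_s. -/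

import Mathlib

open MeasureTheory
open ENNReal NNReal

section Aux

variable {α β : Type*} [MeasurableSpace α] [MeasurableSpace β]
  {μ : Measure α} {ν : Measure β} [SigmaFinite μ] [SigmaFinite ν]

lemma aux_factor_int_left {F : α → ℝ} {G : β → ℝ}
    (hf : Integrable (fun z : α × β => F z.1 * G z.2) (μ.prod ν))
    (hGne : ∫ b, G b ∂ν ≠ 0) : Integrable F μ := by
  have h1 : ∀ᵐ b ∂ν, Integrable (fun a => F a * G b) μ := hf.prod_left_ae
  have h3 : ∃ᵐ b ∂ν, G b ≠ 0 := by
    by_contra h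
    rw [Filter.not_frequently] at h
    simp only [not_not] at h
    exact hGne (by rw [integral_congr_ae h, integral_zero])
  obtain ⟨b, hb1, hb2⟩ := (h1.and_frequently h3).exists
  have h4 := hb1.mul_const (G b)⁻¹
  simpa [mul_assoc, mul_inv_cancel₀ hb2] using h4

lemma aux_factor_int_right {F : α → ℝ} {G : β → ℝ}
    (hf : Integrable (fun z : α × β => F z.1 * G z.2) (μ.prod ν))
    (hFne : ∫ a, F a ∂μ ≠ 0) : Integrable G ν := by
  have h1 : ∀ᵐ a ∂μ, Integrable (fun b => F a * G b) ν := hf.prod_right_ae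
  have h3 : ∃ᵐ a ∂μ, F a ≠ 0 := by
    by_contra h
    rw [Filter.not_frequently] at h
    simp only [not_not] at h
    exact hFne (by rw [integral_congr_ae h, integral_zero])
  obtain ⟨a, ha1, ha2⟩ := (h1.and_frequently h3).exists
  have h4 := ha1.const_mul (F a)⁻¹
  simpa [← mul_assoc, inv_mul_cancel₀ ha2] using h4

lemma aux_int_left {f : α × β → ℝ} (hf : Integrable f (μ.prod ν)) (hf0 : ∀ z, 0 ≤ f z)
    {g : α → ℝ} (hg : Measurable g) (hg0 : ∀ a, 0 ≤ g a)
    (hF : Integrable (fun a => (∫ b, f (a, b) ∂ν) * g a) μ) :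
    Integrable (fun z => f z * g z.1) (μ.prod ν) := by
  have hsm : AEStronglyMeasurable (fun z : α × β => f z * g z.1) (μ.prod ν) :=
    hf.1.mul (hg.comp measurable_fst).aestronglyMeasurable
  refine ⟨hsm, ?_⟩
  show (∫⁻ z, ‖f z * g z.1‖₊ ∂μ.prod ν) < ⊤
  have heq : ∀ z : α × β, (‖f z * g z.1‖₊ : ℝ≥0∞) = ENNReal.ofReal (f z * g z.1) :=
    fun z => Real.enorm_eq_ofReal (mul_nonneg (hf0 z) (hg0 z.1))
  rw [lintegral_congr heq, lintegral_prod _ hsm.aemeasurable.ennreal_ofReal]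
  have key : ∀ᵐ a ∂μ, (∫⁻ b, ENNReal.ofReal (f (a, b) * g a) ∂ν)
      = ENNReal.ofReal ((∫ b, f (a, b) ∂ν) * g a) := by
    filter_upwards [hf.prod_right_ae] with a ha
    have h1 : ∀ b, ENNReal.ofReal (f (a, b) * g a)
        = ENNReal.ofReal (f (a, b)) * ENNReal.ofReal (g a) := fun b => ENNReal.ofReal_mul (hf0 _)
    rw [lintegral_congr h1, lintegral_mul_const'' _ ha.1.aemeasurable.ennreal_ofReal,
      ← ofReal_integral_eq_lintegral_ofReal ha (Filter.Eventually.of_forall fun b => hf0 _),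
      ← ENNReal.ofReal_mul (integral_nonneg fun b => hf0 _)]
  rw [lintegral_congr_ae key]
  calc ∫⁻ a, ENNReal.ofReal ((∫ b, f (a, b) ∂ν) * g a) ∂μ
      ≤ ∫⁻ a, ‖(∫ b, f (a, b) ∂ν) * g a‖₊ ∂μ :=
        lintegral_mono fun a => Real.ofReal_le_enorm _
    _ < ⊤ := hF.2

lemma aux_int_right {f : α × β → ℝ} (hf : Integrable f (μ.prod ν)) (hf0 : ∀ z, 0 ≤ f z)
    {g : β → ℝ} (hg : Measurable g) (hg0 : ∀ b, 0 ≤ g b)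
    (hF : Integrable (fun b => (∫ a, f (a, b) ∂μ) * g b) ν) :
    Integrable (fun z => f z * g z.2) (μ.prod ν) := by
  have hsm : AEStronglyMeasurable (fun z : α × β => f z * g z.2) (μ.prod ν) :=
    hf.1.mul (hg.comp measurable_snd).aestronglyMeasurable
  refine ⟨hsm, ?_⟩
  show (∫⁻ z, ‖f z * g z.2‖₊ ∂μ.prod ν) < ⊤
  have heq : ∀ z : α × β, (‖f z * g z.2‖₊ : ℝ≥0∞) = ENNReal.ofReal (f z * g z.2) :=
    fun z => Real.enorm_eq_ofReal (mul_nonneg (hf0 z) (hg0 z.2))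
  rw [lintegral_congr heq, lintegral_prod_symm _ hsm.aemeasurable.ennreal_ofReal]
  have key : ∀ᵐ b ∂ν, (∫⁻ a, ENNReal.ofReal (f (a, b) * g b) ∂μ)
      = ENNReal.ofReal ((∫ a, f (a, b) ∂μ) * g b) := by
    filter_upwards [hf.prod_left_ae] with b hb
    have h1 : ∀ a, ENNReal.ofReal (f (a, b) * g b)
        = ENNReal.ofReal (f (a, b)) * ENNReal.ofReal (g b) := fun a => ENNReal.ofReal_mul (hf0 _)
    rw [lintegral_congr h1, lintegral_mul_const'' _ hb.1.aemeasurable.ennreal_ofReal,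
      ← ofReal_integral_eq_lintegral_ofReal hb (Filter.Eventually.of_forall fun a => hf0 _),
      ← ENNReal.ofReal_mul (integral_nonneg fun a => hf0 _)]
  rw [lintegral_congr_ae key]
  calc ∫⁻ b, ENNReal.ofReal ((∫ a, f (a, b) ∂μ) * g b) ∂ν
      ≤ ∫⁻ b, ‖(∫ a, f (a, b) ∂μ) * g b‖₊ ∂ν :=
        lintegral_mono fun b => Real.ofReal_le_enorm _
    _ < ⊤ := hF.2

lemma abs_mul_le_half (a b : ℝ) : |a * b| ≤ (a ^ 2 + b ^ 2) / 2 := by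
  rw [abs_le]
  constructor <;> nlinarith [sq_nonneg (a + b), sq_nonneg (a - b)]

end Aux

/-- The reweighted density `P_w = w · P` with
`w(y,z_c,z_s) = P(y,z_c)·P(z_s)/P(y,z_c,z_s)`. -/
noncomputable def reweightedDensity (dc ds : ℕ)
    (p : ℝ × (Fin dc → ℝ) × (Fin ds → ℝ) → ℝ)
    (pYC : ℝ × (Fin dc → ℝ) → ℝ) (pS : (Fin ds → ℝ) → ℝ) :
    ℝ × (Fin dc → ℝ) × (Fin ds → ℝ) → ℝ :=
  fun v => (pYC (v.1, v.2.1) * pS v.2.2 / p v) * p v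

/-- The observed feature `x = S [z_c; z_s]`. -/
def obsFeat (dc ds : ℕ) (S : Matrix (Fin dc ⊕ Fin ds) (Fin dc ⊕ Fin ds) ℝ)
    (v : ℝ × (Fin dc → ℝ) × (Fin ds → ℝ)) : Fin dc ⊕ Fin ds → ℝ :=
  S.mulVec (Sum.elim v.2.1 v.2.2)

/-- Identifiability, population level: with `P > 0` everywhere, `x = S[z_c;z_s]`
invertible with inverse `T`, features centered under the weight
`w = P(y,z_c)P(z_s)/P(y,z_c,z_s)`, and invertible marginal second moment matrices,
the minimizer of the weighted population least-squares loss `E[w (y - x^⊤θ)²]` is the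
optimal debiased predictor `θ̄ = T^⊤ [θ̄_c; 0]` with `θ̄_c = Σ_c⁻¹ E[z_c y]`;
in particular it places no weight on the spurious features. -/
theorem weighted_ols_is_debiased_predictor (dc ds : ℕ)
    (S T : Matrix (Fin dc ⊕ Fin ds) (Fin dc ⊕ Fin ds) ℝ)
    (hTS : T * S = 1)
    (p : ℝ × (Fin dc → ℝ) × (Fin ds → ℝ) → ℝ)
    (pYC : ℝ × (Fin dc → ℝ) → ℝ) (pS : (Fin ds → ℝ) → ℝ)
    (hpos : ∀ v, 0 < p v)
    (hint : Integrable p)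
    (hnorm : ∫ v, p v = 1)
    (hYC : ∀ y zc, pYC (y, zc) = ∫ zs, p (y, zc, zs))
    (hS : ∀ zs, pS zs = ∫ y : ℝ, ∫ zc : Fin dc → ℝ, p (y, zc, zs))
    -- features are centered under the reweighted distribution
    (hcc : ∀ i, (∫ v : ℝ × (Fin dc → ℝ) × (Fin ds → ℝ),
      reweightedDensity dc ds p pYC pS v * v.2.1 i) = 0)
    (hcs : ∀ j, (∫ v : ℝ × (Fin dc → ℝ) × (Fin ds → ℝ),
      reweightedDensity dc ds p pYC pS v * v.2.2 j) = 0)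
    -- marginal second moment matrices
    (Sc : Matrix (Fin dc) (Fin dc) ℝ)
    (hSc : Sc = Matrix.of fun i j =>
      ∫ v : ℝ × (Fin dc → ℝ) × (Fin ds → ℝ), p v * v.2.1 i * v.2.1 j)
    [Invertible Sc]
    (Ss : Matrix (Fin ds) (Fin ds) ℝ)
    (hSs : Ss = Matrix.of fun i j =>
      ∫ v : ℝ × (Fin dc → ℝ) × (Fin ds → ℝ), p v * v.2.2 i * v.2.2 j)
    [Invertible Ss]
    (hintL : ∀ θ : Fin dc ⊕ Fin ds → ℝ,
      Integrable (fun v : ℝ × (Fin dc → ℝ) × (Fin ds → ℝ) =>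
        reweightedDensity dc ds p pYC pS v *
          (v.1 - dotProduct (obsFeat dc ds S v) θ) ^ 2))
    -- the optimal debiased predictor
    (θbar : Fin dc ⊕ Fin ds → ℝ)
    (hθbar : θbar = T.transpose.mulVec
      (Sum.elim (Sc⁻¹.mulVec fun i =>
        ∫ v : ℝ × (Fin dc → ℝ) × (Fin ds → ℝ), p v * v.2.1 i * v.1) 0)) :
    ∀ θ : Fin dc ⊕ Fin ds → ℝ,
      (∫ v : ℝ × (Fin dc → ℝ) × (Fin ds → ℝ),
          reweightedDensity dc ds p pYC pS v *
            (v.1 - dotProduct (obsFeat dc ds S v) θbar) ^ 2) ≤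
        (∫ v : ℝ × (Fin dc → ℝ) × (Fin ds → ℝ),
          reweightedDensity dc ds p pYC pS v *
            (v.1 - dotProduct (obsFeat dc ds S v) θ) ^ 2) ∧
      ((∫ v : ℝ × (Fin dc → ℝ) × (Fin ds → ℝ),
          reweightedDensity dc ds p pYC pS v *
            (v.1 - dotProduct (obsFeat dc ds S v) θ) ^ 2) =
        (∫ v : ℝ × (Fin dc → ℝ) × (Fin ds → ℝ),
          reweightedDensity dc ds p pYC pS v *
            (v.1 - dotProduct (obsFeat dc ds S v) θbar) ^ 2) →
        θ = θbar) := by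
  classical
  obtain ⟨q, hQ⟩ : ∃ q, reweightedDensity dc ds p pYC pS = q := ⟨_, rfl⟩
  rw [hQ] at hcc hcs hintL ⊢
  have hqv : ∀ v, q v = pYC (v.1, v.2.1) * pS v.2.2 := fun v => by
    rw [← hQ]; exact div_mul_cancel₀ _ (hpos v).ne'
  intro θ
  -- transfer between the two product structures
  have hassoc := volume_preserving_prodAssoc (α₁ := ℝ) (β₁ := Fin dc → ℝ) (γ₁ := Fin ds → ℝ)
  have toProd : ∀ f : ℝ × (Fin dc → ℝ) × (Fin ds → ℝ) → ℝ,
      (∫ v, f v) = ∫ z : (ℝ × (Fin dc → ℝ)) × (Fin ds → ℝ), f (z.1.1, z.1.2, z.2) :=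
    fun f => (hassoc.integral_comp' f).symm
  have toProdInt : ∀ f : ℝ × (Fin dc → ℝ) × (Fin ds → ℝ) → ℝ, Integrable f →
      Integrable (fun z : (ℝ × (Fin dc → ℝ)) × (Fin ds → ℝ) => f (z.1.1, z.1.2, z.2)) :=
    fun f hf =>
      (hassoc.integrable_comp_emb MeasurableEquiv.prodAssoc.measurableEmbedding).mpr hf
  have hp0 : ∀ v, 0 ≤ p v := fun v => (hpos v).le
  have hp' : Integrable (fun z : (ℝ × (Fin dc → ℝ)) × (Fin ds → ℝ) => p (z.1.1, z.1.2, z.2)) :=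
    toProdInt p hint
  have hp'prod : Integrable (fun z : (ℝ × (Fin dc → ℝ)) × (Fin ds → ℝ) => p (z.1.1, z.1.2, z.2))
      ((volume : Measure (ℝ × (Fin dc → ℝ))).prod (volume : Measure (Fin ds → ℝ))) := hp'
  have hpYC_eq : ∀ a : ℝ × (Fin dc → ℝ), pYC a = ∫ b, p (a.1, a.2, b) := fun a => hYC a.1 a.2
  have hpYC0 : ∀ a, 0 ≤ pYC a := fun a => by
    rw [hpYC_eq]; exact integral_nonneg fun b => hp0 _
  have hpS0 : ∀ b, 0 ≤ pS b := fun b => by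
    rw [hS]; exact integral_nonneg fun y => integral_nonneg fun zc => hp0 _
  have hq0 : ∀ v, 0 ≤ q v := fun v => by
    rw [hqv]; exact mul_nonneg (hpYC0 _) (hpS0 _)
  have hpS_ae : pS =ᵐ[(volume : Measure (Fin ds → ℝ))]
      fun b => ∫ a : ℝ × (Fin dc → ℝ), p (a.1, a.2, b) := by
    filter_upwards [hp'prod.prod_left_ae] with b hb
    rw [hS, ← integral_prod _ hb]
    rfl
  have hpYCsm : AEStronglyMeasurable pYC (volume : Measure (ℝ × (Fin dc → ℝ))) := by
    have h := hp'prod.1.integral_prod_right'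
    exact h.congr (Filter.Eventually.of_forall fun a => (hpYC_eq a).symm)
  have hpSsm : AEStronglyMeasurable pS (volume : Measure (Fin ds → ℝ)) := by
    have h := hp'prod.1.prod_swap.integral_prod_right'
    exact h.congr hpS_ae.symm
  -- a.e. strong measurability of q
  have hqmpA : Measure.QuasiMeasurePreserving
      (fun v : ℝ × (Fin dc → ℝ) × (Fin ds → ℝ) => (v.1, v.2.1))
      (volume) (volume : Measure (ℝ × (Fin dc → ℝ))) :=
    (Measure.quasiMeasurePreserving_fst (μ := (volume : Measure (ℝ × (Fin dc → ℝ))))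
      (ν := (volume : Measure (Fin ds → ℝ)))).comp
      ((hassoc.symm MeasurableEquiv.prodAssoc).quasiMeasurePreserving)
  have hqmpB : Measure.QuasiMeasurePreserving
      (fun v : ℝ × (Fin dc → ℝ) × (Fin ds → ℝ) => v.2.2)
      (volume) (volume : Measure (Fin ds → ℝ)) :=
    (Measure.quasiMeasurePreserving_snd (μ := (volume : Measure (Fin dc → ℝ)))
      (ν := (volume : Measure (Fin ds → ℝ)))).comp
      (Measure.quasiMeasurePreserving_snd (μ := (volume : Measure ℝ)))
  have hqsm : AEStronglyMeasurable q (volume) := by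
    have h1 := hpYCsm.comp_quasiMeasurePreserving hqmpA
    have h2 := hpSsm.comp_quasiMeasurePreserving hqmpB
    exact (h1.mul h2).congr (Filter.Eventually.of_forall fun v => (hqv v).symm)
  -- latent features
  have hdot : ∀ (θ' : Fin dc ⊕ Fin ds → ℝ) v,
      dotProduct (obsFeat dc ds S v) θ'
        = dotProduct (Sum.elim v.2.1 v.2.2) (S.transpose.mulVec θ') := by
    intro θ' v
    show dotProduct (S.mulVec (Sum.elim v.2.1 v.2.2)) θ' = _
    rw [dotProduct_comm, Matrix.dotProduct_mulVec, ← Matrix.mulVec_transpose,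
      dotProduct_comm]
  have hST : ∀ u, S.transpose.mulVec (T.transpose.mulVec u) = u := by
    intro u
    rw [Matrix.mulVec_mulVec, ← Matrix.transpose_mul, hTS, Matrix.transpose_one,
      Matrix.one_mulVec]
  have hTS' : ∀ u, T.transpose.mulVec (S.transpose.mulVec u) = u := by
    intro u
    rw [Matrix.mulVec_mulVec, ← Matrix.transpose_mul, mul_eq_one_comm.mp hTS,
      Matrix.transpose_one, Matrix.one_mulVec]
  have hZm : ∀ u : Fin dc ⊕ Fin ds → ℝ, Measurable
      (fun v : ℝ × (Fin dc → ℝ) × (Fin ds → ℝ) => dotProduct (Sum.elim v.2.1 v.2.2) u) := by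
    intro u
    show Measurable fun v : ℝ × (Fin dc → ℝ) × (Fin ds → ℝ) =>
      ∑ k, Sum.elim v.2.1 v.2.2 k * u k
    refine Finset.measurable_sum _ fun k _ => ?_
    cases k with
    | inl i => exact ((measurable_pi_apply i).comp
        (measurable_fst.comp measurable_snd)).mul_const _
    | inr j => exact ((measurable_pi_apply j).comp
        (measurable_snd.comp measurable_snd)).mul_const _
  -- integrability family
  have hL : ∀ θ' : Fin dc ⊕ Fin ds → ℝ, Integrable (fun v : ℝ × (Fin dc → ℝ) × (Fin ds → ℝ) =>
      q v * (v.1 - dotProduct (Sum.elim v.2.1 v.2.2) (S.transpose.mulVec θ')) ^ 2) := by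
    intro θ'
    have h := hintL θ'
    simpa only [hdot] using h
  have hLZ : ∀ u : Fin dc ⊕ Fin ds → ℝ, Integrable (fun v : ℝ × (Fin dc → ℝ) × (Fin ds → ℝ) =>
      q v * (v.1 - dotProduct (Sum.elim v.2.1 v.2.2) u) ^ 2) := by
    intro u
    have h := hL (T.transpose.mulVec u)
    simpa only [hST] using h
  have hy2 : Integrable (fun v : ℝ × (Fin dc → ℝ) × (Fin ds → ℝ) => q v * (v.1 * v.1)) := by
    have h := hLZ 0
    have e : (fun v : ℝ × (Fin dc → ℝ) × (Fin ds → ℝ) =>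
        q v * (v.1 - dotProduct (Sum.elim v.2.1 v.2.2) 0) ^ 2)
        = fun v : ℝ × (Fin dc → ℝ) × (Fin ds → ℝ) => q v * (v.1 * v.1) := by
      funext v; rw [dotProduct_zero]; ring
    exact e ▸ h
  have hmix : ∀ u w : Fin dc ⊕ Fin ds → ℝ,
      Integrable (fun v : ℝ × (Fin dc → ℝ) × (Fin ds → ℝ) =>
        q v * ((v.1 - dotProduct (Sum.elim v.2.1 v.2.2) u)
          * (v.1 - dotProduct (Sum.elim v.2.1 v.2.2) w))) := by
    intro u w
    refine Integrable.mono' (((hLZ u).add (hLZ w)).div_const 2)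
      (hqsm.mul ((measurable_fst.sub (hZm u)).mul
        (measurable_fst.sub (hZm w))).aestronglyMeasurable)
      (Filter.Eventually.of_forall fun v => ?_)
    have a := v.1 - dotProduct (Sum.elim v.2.1 v.2.2) u
    rw [Real.norm_eq_abs, abs_mul, abs_of_nonneg (hq0 v)]
    calc q v * |(v.1 - dotProduct (Sum.elim v.2.1 v.2.2) u)
          * (v.1 - dotProduct (Sum.elim v.2.1 v.2.2) w)|
        ≤ q v * (((v.1 - dotProduct (Sum.elim v.2.1 v.2.2) u) ^ 2
            + (v.1 - dotProduct (Sum.elim v.2.1 v.2.2) w) ^ 2) / 2) :=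
          mul_le_mul_of_nonneg_left (abs_mul_le_half _ _) (hq0 v)
      _ = (q v * (v.1 - dotProduct (Sum.elim v.2.1 v.2.2) u) ^ 2
            + q v * (v.1 - dotProduct (Sum.elim v.2.1 v.2.2) w) ^ 2) / 2 := by ring
  have hymix : ∀ u : Fin dc ⊕ Fin ds → ℝ,
      Integrable (fun v : ℝ × (Fin dc → ℝ) × (Fin ds → ℝ) =>
        q v * (v.1 * (v.1 - dotProduct (Sum.elim v.2.1 v.2.2) u))) := by
    intro u
    have h := hmix 0 u
    simpa only [dotProduct_zero, sub_zero] using h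
  have hqZsq : ∀ u : Fin dc ⊕ Fin ds → ℝ,
      Integrable (fun v : ℝ × (Fin dc → ℝ) × (Fin ds → ℝ) =>
        q v * (dotProduct (Sum.elim v.2.1 v.2.2) u
          * dotProduct (Sum.elim v.2.1 v.2.2) u)) := by
    intro u
    have h := (hy2.sub ((hymix u).const_mul 2)).add (hLZ u)
    have e : (fun v : ℝ × (Fin dc → ℝ) × (Fin ds → ℝ) =>
        (q v * (v.1 * v.1) - 2 * (q v * (v.1 * (v.1
          - dotProduct (Sum.elim v.2.1 v.2.2) u))))
          + q v * (v.1 - dotProduct (Sum.elim v.2.1 v.2.2) u) ^ 2)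
        = fun v : ℝ × (Fin dc → ℝ) × (Fin ds → ℝ) =>
          q v * (dotProduct (Sum.elim v.2.1 v.2.2) u
            * dotProduct (Sum.elim v.2.1 v.2.2) u) := by
      funext v; ring
    exact e ▸ h
  have hqyZ : ∀ u : Fin dc ⊕ Fin ds → ℝ,
      Integrable (fun v : ℝ × (Fin dc → ℝ) × (Fin ds → ℝ) =>
        q v * (v.1 * dotProduct (Sum.elim v.2.1 v.2.2) u)) := by
    intro u
    have h := hy2.sub (hymix u)
    have e : (fun v : ℝ × (Fin dc → ℝ) × (Fin ds → ℝ) =>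
        q v * (v.1 * v.1) - q v * (v.1 * (v.1
          - dotProduct (Sum.elim v.2.1 v.2.2) u)))
        = fun v : ℝ × (Fin dc → ℝ) × (Fin ds → ℝ) =>
          q v * (v.1 * dotProduct (Sum.elim v.2.1 v.2.2) u) := by
      funext v; ring
    exact e ▸ h
  have hqZZ : ∀ u w : Fin dc ⊕ Fin ds → ℝ,
      Integrable (fun v : ℝ × (Fin dc → ℝ) × (Fin ds → ℝ) =>
        q v * (dotProduct (Sum.elim v.2.1 v.2.2) u
          * dotProduct (Sum.elim v.2.1 v.2.2) w)) := by
    intro u w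
    have h := (((hqZsq (u + w)).sub (hqZsq u)).sub (hqZsq w)).div_const 2
    have e : (fun v : ℝ × (Fin dc → ℝ) × (Fin ds → ℝ) =>
        ((q v * (dotProduct (Sum.elim v.2.1 v.2.2) (u + w)
            * dotProduct (Sum.elim v.2.1 v.2.2) (u + w))
          - q v * (dotProduct (Sum.elim v.2.1 v.2.2) u
            * dotProduct (Sum.elim v.2.1 v.2.2) u))
          - q v * (dotProduct (Sum.elim v.2.1 v.2.2) w
            * dotProduct (Sum.elim v.2.1 v.2.2) w)) / 2)
        = fun v : ℝ × (Fin dc → ℝ) × (Fin ds → ℝ) =>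
          q v * (dotProduct (Sum.elim v.2.1 v.2.2) u
            * dotProduct (Sum.elim v.2.1 v.2.2) w) := by
      funext v; rw [dotProduct_add]; ring
    exact e ▸ h
  have hsingle : ∀ (v : ℝ × (Fin dc → ℝ) × (Fin ds → ℝ)) (k : Fin dc ⊕ Fin ds),
      dotProduct (Sum.elim v.2.1 v.2.2) (Pi.single k 1) = Sum.elim v.2.1 v.2.2 k := by
    intro v k; rw [dotProduct_single, mul_one]
  have hqkl : ∀ k l : Fin dc ⊕ Fin ds,
      Integrable (fun v : ℝ × (Fin dc → ℝ) × (Fin ds → ℝ) =>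
        q v * (Sum.elim v.2.1 v.2.2 k * Sum.elim v.2.1 v.2.2 l)) := by
    intro k l
    have h := hqZZ (Pi.single k 1) (Pi.single l 1)
    simpa only [hsingle] using h
  have hqyk : ∀ k : Fin dc ⊕ Fin ds,
      Integrable (fun v : ℝ × (Fin dc → ℝ) × (Fin ds → ℝ) =>
        q v * (v.1 * Sum.elim v.2.1 v.2.2 k)) := by
    intro k
    have h := hqyZ (Pi.single k 1)
    simpa only [hsingle] using h
  -- factorization of integrals under q
  have factor : ∀ (G : ℝ × (Fin dc → ℝ) → ℝ) (H : (Fin ds → ℝ) → ℝ),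
      (∫ v : ℝ × (Fin dc → ℝ) × (Fin ds → ℝ),
        (pYC (v.1, v.2.1) * G (v.1, v.2.1)) * (pS v.2.2 * H v.2.2))
        = (∫ a, pYC a * G a) * ∫ b, pS b * H b := by
    intro G H
    rw [toProd (fun v => (pYC (v.1, v.2.1) * G (v.1, v.2.1)) * (pS v.2.2 * H v.2.2))]
    exact integral_prod_mul (μ := (volume : Measure (ℝ × (Fin dc → ℝ))))
      (ν := (volume : Measure (Fin ds → ℝ))) (fun a => pYC a * G a) (fun b => pS b * H b)
  -- marginal identities
  have hmargYC : ∀ g : ℝ × (Fin dc → ℝ) → ℝ,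
      Integrable (fun z : (ℝ × (Fin dc → ℝ)) × (Fin ds → ℝ) =>
        p (z.1.1, z.1.2, z.2) * g (z.1.1, z.1.2))
        ((volume : Measure (ℝ × (Fin dc → ℝ))).prod (volume : Measure (Fin ds → ℝ))) →
      (∫ a, pYC a * g a) = ∫ v : ℝ × (Fin dc → ℝ) × (Fin ds → ℝ), p v * g (v.1, v.2.1) := by
    intro g hgint
    rw [toProd (fun v => p v * g (v.1, v.2.1))]
    have h1 := integral_prod _ hgint
    have h2 : (∫ z : (ℝ × (Fin dc → ℝ)) × (Fin ds → ℝ),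
        p (z.1.1, z.1.2, z.2) * g (z.1.1, z.1.2))
        = ∫ a : ℝ × (Fin dc → ℝ), ∫ b, p (a.1, a.2, b) * g (a.1, a.2) := h1
    rw [h2]
    have h3 : ∀ a : ℝ × (Fin dc → ℝ),
        pYC a * g a = ∫ b, p (a.1, a.2, b) * g (a.1, a.2) := by
      intro a
      rw [integral_mul_const, ← hpYC_eq]
    simp only [h3]
  have hmargS : ∀ h : (Fin ds → ℝ) → ℝ,
      Integrable (fun z : (ℝ × (Fin dc → ℝ)) × (Fin ds → ℝ) =>
        p (z.1.1, z.1.2, z.2) * h z.2)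
        ((volume : Measure (ℝ × (Fin dc → ℝ))).prod (volume : Measure (Fin ds → ℝ))) →
      (∫ b, pS b * h b) = ∫ v : ℝ × (Fin dc → ℝ) × (Fin ds → ℝ), p v * h v.2.2 := by
    intro h hgint
    rw [toProd (fun v => p v * h v.2.2)]
    have h1 := integral_prod_symm _ hgint
    have h2 : (∫ z : (ℝ × (Fin dc → ℝ)) × (Fin ds → ℝ),
        p (z.1.1, z.1.2, z.2) * h z.2)
        = ∫ b, ∫ a : ℝ × (Fin dc → ℝ), p (a.1, a.2, b) * h b := h1
    rw [h2]
    refine integral_congr_ae ?_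
    filter_upwards [hpS_ae] with b hb
    rw [integral_mul_const, ← hb]
  -- total masses
  have hIpYC : (∫ a, pYC a) = 1 := by
    have h2 : (∫ a, pYC a) = ∫ a : ℝ × (Fin dc → ℝ), ∫ b, p (a.1, a.2, b) := by
      simp only [hpYC_eq]
    rw [h2, ← integral_prod _ hp'prod]
    have h3 : (∫ z : (ℝ × (Fin dc → ℝ)) × (Fin ds → ℝ), p (z.1.1, z.1.2, z.2)) = 1 := by
      rw [← toProd p]; exact hnorm
    exact h3
  have hIpS : (∫ b, pS b) = 1 := by
    have h2 : (∫ b, pS b) = ∫ b, ∫ a : ℝ × (Fin dc → ℝ), p (a.1, a.2, b) :=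
      integral_congr_ae hpS_ae
    rw [h2, ← integral_prod_symm _ hp'prod]
    have h3 : (∫ z : (ℝ × (Fin dc → ℝ)) × (Fin ds → ℝ), p (z.1.1, z.1.2, z.2)) = 1 := by
      rw [← toProd p]; exact hnorm
    exact h3
  -- integrability of p-weighted second moments
  have hpg2 : ∀ g : ℝ × (Fin dc → ℝ) → ℝ, Measurable g → (∀ a, 0 ≤ g a) →
      Integrable (fun v : ℝ × (Fin dc → ℝ) × (Fin ds → ℝ) => q v * g (v.1, v.2.1)) →
      Integrable (fun z : (ℝ × (Fin dc → ℝ)) × (Fin ds → ℝ) =>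
        p (z.1.1, z.1.2, z.2) * g (z.1.1, z.1.2))
        ((volume : Measure (ℝ × (Fin dc → ℝ))).prod (volume : Measure (Fin ds → ℝ))) := by
    intro g hg hg0 hqg
    have h0 := toProdInt _ hqg
    have h1 : Integrable (fun z : (ℝ × (Fin dc → ℝ)) × (Fin ds → ℝ) =>
        (pYC z.1 * g z.1) * pS z.2)
        ((volume : Measure (ℝ × (Fin dc → ℝ))).prod (volume : Measure (Fin ds → ℝ))) := by
      have e : (fun z : (ℝ × (Fin dc → ℝ)) × (Fin ds → ℝ) =>
          q (z.1.1, z.1.2, z.2) * g (z.1.1, z.1.2))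
          = fun z : (ℝ × (Fin dc → ℝ)) × (Fin ds → ℝ) => (pYC z.1 * g z.1) * pS z.2 := by
        funext z; rw [hqv]; ring
      exact e ▸ h0
    have h2 : Integrable (fun a => pYC a * g a)
        (volume : Measure (ℝ × (Fin dc → ℝ))) :=
      aux_factor_int_left h1 (by rw [hIpS]; exact one_ne_zero)
    have h3 : Integrable (fun a : ℝ × (Fin dc → ℝ) => (∫ b, p (a.1, a.2, b)) * g a)
        (volume : Measure (ℝ × (Fin dc → ℝ))) := by
      have e : (fun a : ℝ × (Fin dc → ℝ) => pYC a * g a)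
          = fun a : ℝ × (Fin dc → ℝ) => (∫ b, p (a.1, a.2, b)) * g a := by
        funext a; rw [hpYC_eq]
      exact e ▸ h2
    exact aux_int_left hp'prod (fun z => hp0 _) hg hg0 h3
  have hph2 : ∀ h : (Fin ds → ℝ) → ℝ, Measurable h → (∀ b, 0 ≤ h b) →
      Integrable (fun v : ℝ × (Fin dc → ℝ) × (Fin ds → ℝ) => q v * h v.2.2) →
      Integrable (fun z : (ℝ × (Fin dc → ℝ)) × (Fin ds → ℝ) =>
        p (z.1.1, z.1.2, z.2) * h z.2)
        ((volume : Measure (ℝ × (Fin dc → ℝ))).prod (volume : Measure (Fin ds → ℝ))) := by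
    intro h hh hh0 hqh
    have h0 := toProdInt _ hqh
    have h1 : Integrable (fun z : (ℝ × (Fin dc → ℝ)) × (Fin ds → ℝ) =>
        pYC z.1 * (pS z.2 * h z.2))
        ((volume : Measure (ℝ × (Fin dc → ℝ))).prod (volume : Measure (Fin ds → ℝ))) := by
      have e : (fun z : (ℝ × (Fin dc → ℝ)) × (Fin ds → ℝ) =>
          q (z.1.1, z.1.2, z.2) * h z.2)
          = fun z : (ℝ × (Fin dc → ℝ)) × (Fin ds → ℝ) => pYC z.1 * (pS z.2 * h z.2) := by
        funext z; rw [hqv]; ring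
      exact e ▸ h0
    have h2 : Integrable (fun b => pS b * h b) (volume : Measure (Fin ds → ℝ)) :=
      aux_factor_int_right h1 (by rw [hIpYC]; exact one_ne_zero)
    have h3 : Integrable (fun b => (∫ a : ℝ × (Fin dc → ℝ), p (a.1, a.2, b)) * h b)
        (volume : Measure (Fin ds → ℝ)) :=
      h2.congr (by filter_upwards [hpS_ae] with b hb; rw [hb])
    exact aux_int_right hp'prod (fun z => hp0 _) hh hh0 h3
  have hsq_c : ∀ i : Fin dc, Integrable (fun z : (ℝ × (Fin dc → ℝ)) × (Fin ds → ℝ) =>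
      p (z.1.1, z.1.2, z.2) * (z.1.2 i * z.1.2 i))
      ((volume : Measure (ℝ × (Fin dc → ℝ))).prod (volume : Measure (Fin ds → ℝ))) :=
    fun i => hpg2 (fun a => a.2 i * a.2 i)
      (((measurable_pi_apply i).comp measurable_snd).mul
        ((measurable_pi_apply i).comp measurable_snd))
      (fun a => mul_self_nonneg _) (hqkl (Sum.inl i) (Sum.inl i))
  have hsq_y : Integrable (fun z : (ℝ × (Fin dc → ℝ)) × (Fin ds → ℝ) =>
      p (z.1.1, z.1.2, z.2) * (z.1.1 * z.1.1))
      ((volume : Measure (ℝ × (Fin dc → ℝ))).prod (volume : Measure (Fin ds → ℝ))) :=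
    hpg2 (fun a => a.1 * a.1) (measurable_fst.mul measurable_fst)
      (fun a => mul_self_nonneg _) hy2
  have hsq_s : ∀ j : Fin ds, Integrable (fun z : (ℝ × (Fin dc → ℝ)) × (Fin ds → ℝ) =>
      p (z.1.1, z.1.2, z.2) * (z.2 j * z.2 j))
      ((volume : Measure (ℝ × (Fin dc → ℝ))).prod (volume : Measure (Fin ds → ℝ))) :=
    fun j => hph2 (fun b => b j * b j)
      ((measurable_pi_apply j).mul (measurable_pi_apply j))
      (fun b => mul_self_nonneg _) (hqkl (Sum.inr j) (Sum.inr j))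
  have hmono : ∀ G1 G2 : (ℝ × (Fin dc → ℝ)) × (Fin ds → ℝ) → ℝ, Measurable G1 → Measurable G2 →
      Integrable (fun z : (ℝ × (Fin dc → ℝ)) × (Fin ds → ℝ) =>
        p (z.1.1, z.1.2, z.2) * (G1 z * G1 z))
        ((volume : Measure (ℝ × (Fin dc → ℝ))).prod (volume : Measure (Fin ds → ℝ))) →
      Integrable (fun z : (ℝ × (Fin dc → ℝ)) × (Fin ds → ℝ) =>
        p (z.1.1, z.1.2, z.2) * (G2 z * G2 z))
        ((volume : Measure (ℝ × (Fin dc → ℝ))).prod (volume : Measure (Fin ds → ℝ))) →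
      Integrable (fun z : (ℝ × (Fin dc → ℝ)) × (Fin ds → ℝ) =>
        p (z.1.1, z.1.2, z.2) * (G1 z * G2 z))
        ((volume : Measure (ℝ × (Fin dc → ℝ))).prod (volume : Measure (Fin ds → ℝ))) := by
    intro G1 G2 h1m h2m h1 h2
    refine Integrable.mono' ((h1.add h2).div_const 2)
      (hp'prod.1.mul (h1m.mul h2m).aestronglyMeasurable)
      (Filter.Eventually.of_forall fun z => ?_)
    rw [Real.norm_eq_abs, abs_mul, abs_of_nonneg (hp0 _)]
    calc p (z.1.1, z.1.2, z.2) * |G1 z * G2 z|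
        ≤ p (z.1.1, z.1.2, z.2) * ((G1 z ^ 2 + G2 z ^ 2) / 2) :=
          mul_le_mul_of_nonneg_left (abs_mul_le_half _ _) (hp0 _)
      _ = (p (z.1.1, z.1.2, z.2) * (G1 z * G1 z)
            + p (z.1.1, z.1.2, z.2) * (G2 z * G2 z)) / 2 := by ring
  have hpcc : ∀ i j : Fin dc, Integrable (fun z : (ℝ × (Fin dc → ℝ)) × (Fin ds → ℝ) =>
      p (z.1.1, z.1.2, z.2) * (z.1.2 i * z.1.2 j))
      ((volume : Measure (ℝ × (Fin dc → ℝ))).prod (volume : Measure (Fin ds → ℝ))) :=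
    fun i j => hmono _ _ ((measurable_pi_apply i).comp (measurable_fst.snd))
      ((measurable_pi_apply j).comp (measurable_fst.snd)) (hsq_c i) (hsq_c j)
  have hpyc : ∀ i : Fin dc, Integrable (fun z : (ℝ × (Fin dc → ℝ)) × (Fin ds → ℝ) =>
      p (z.1.1, z.1.2, z.2) * (z.1.1 * z.1.2 i))
      ((volume : Measure (ℝ × (Fin dc → ℝ))).prod (volume : Measure (Fin ds → ℝ))) :=
    fun i => hmono _ _ measurable_fst.fst
      ((measurable_pi_apply i).comp (measurable_fst.snd)) hsq_y (hsq_c i)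
  have hpss : ∀ j j' : Fin ds, Integrable (fun z : (ℝ × (Fin dc → ℝ)) × (Fin ds → ℝ) =>
      p (z.1.1, z.1.2, z.2) * (z.2 j * z.2 j'))
      ((volume : Measure (ℝ × (Fin dc → ℝ))).prod (volume : Measure (Fin ds → ℝ))) :=
    fun j j' => hmono _ _ ((measurable_pi_apply j).comp measurable_snd)
      ((measurable_pi_apply j').comp measurable_snd) (hsq_s j) (hsq_s j')
  -- moment identities under q
  have hMcc : ∀ i j : Fin dc,
      (∫ v : ℝ × (Fin dc → ℝ) × (Fin ds → ℝ), q v * (v.2.1 i * v.2.1 j)) = Sc i j := by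
    intro i j
    have e : (fun v : ℝ × (Fin dc → ℝ) × (Fin ds → ℝ) => q v * (v.2.1 i * v.2.1 j))
        = fun v : ℝ × (Fin dc → ℝ) × (Fin ds → ℝ) =>
          (pYC (v.1, v.2.1) * (v.2.1 i * v.2.1 j)) * (pS v.2.2 * 1) := by
      funext v; rw [hqv]; ring
    rw [e, factor (fun a => a.2 i * a.2 j) (fun _ => (1:ℝ)), hmargYC _ (hpcc i j)]
    have h1 : (∫ b, pS b * 1) = 1 := by
      simp only [mul_one]; exact hIpS
    rw [h1, mul_one, hSc]
    show (∫ v : ℝ × (Fin dc → ℝ) × (Fin ds → ℝ), p v * (v.2.1 i * v.2.1 j))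
      = ∫ v : ℝ × (Fin dc → ℝ) × (Fin ds → ℝ), p v * v.2.1 i * v.2.1 j
    simp only [mul_assoc]
  have hMyc : ∀ i : Fin dc,
      (∫ v : ℝ × (Fin dc → ℝ) × (Fin ds → ℝ), q v * (v.1 * v.2.1 i))
        = ∫ v : ℝ × (Fin dc → ℝ) × (Fin ds → ℝ), p v * v.2.1 i * v.1 := by
    intro i
    have e : (fun v : ℝ × (Fin dc → ℝ) × (Fin ds → ℝ) => q v * (v.1 * v.2.1 i))
        = fun v : ℝ × (Fin dc → ℝ) × (Fin ds → ℝ) =>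
          (pYC (v.1, v.2.1) * (v.1 * v.2.1 i)) * (pS v.2.2 * 1) := by
      funext v; rw [hqv]; ring
    rw [e, factor (fun a => a.1 * a.2 i) (fun _ => (1:ℝ)), hmargYC _ (hpyc i)]
    have h1 : (∫ b, pS b * 1) = 1 := by
      simp only [mul_one]; exact hIpS
    rw [h1, mul_one]
    have e2 : (fun v : ℝ × (Fin dc → ℝ) × (Fin ds → ℝ) => p v * (v.1 * v.2.1 i))
        = fun v : ℝ × (Fin dc → ℝ) × (Fin ds → ℝ) => p v * v.2.1 i * v.1 := by
      funext v; ring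
    rw [e2]
  have hMss : ∀ j j' : Fin ds,
      (∫ v : ℝ × (Fin dc → ℝ) × (Fin ds → ℝ), q v * (v.2.2 j * v.2.2 j')) = Ss j j' := by
    intro j j'
    have e : (fun v : ℝ × (Fin dc → ℝ) × (Fin ds → ℝ) => q v * (v.2.2 j * v.2.2 j'))
        = fun v : ℝ × (Fin dc → ℝ) × (Fin ds → ℝ) =>
          (pYC (v.1, v.2.1) * 1) * (pS v.2.2 * (v.2.2 j * v.2.2 j')) := by
      funext v; rw [hqv]; ring
    rw [e, factor (fun _ => (1:ℝ)) (fun b => b j * b j'), hmargS _ (hpss j j')]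
    have h1 : (∫ a, pYC a * 1) = 1 := by
      simp only [mul_one]; exact hIpYC
    rw [h1, one_mul, hSs]
    show (∫ v : ℝ × (Fin dc → ℝ) × (Fin ds → ℝ), p v * (v.2.2 j * v.2.2 j'))
      = ∫ v : ℝ × (Fin dc → ℝ) × (Fin ds → ℝ), p v * v.2.2 j * v.2.2 j'
    simp only [mul_assoc]
  have hpSz : ∀ j : Fin ds, (∫ b : Fin ds → ℝ, pS b * b j) = 0 := by
    intro j
    have h := hcs j
    have e : (fun v : ℝ × (Fin dc → ℝ) × (Fin ds → ℝ) => q v * v.2.2 j)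
        = fun v : ℝ × (Fin dc → ℝ) × (Fin ds → ℝ) =>
          (pYC (v.1, v.2.1) * 1) * (pS v.2.2 * v.2.2 j) := by
      funext v; rw [hqv]; ring
    rw [e, factor (fun _ => (1:ℝ)) (fun b => b j)] at h
    have h1 : (∫ a, pYC a * 1) = 1 := by
      simp only [mul_one]; exact hIpYC
    rw [h1, one_mul] at h
    exact h
  have hMcs : ∀ (i : Fin dc) (j : Fin ds),
      (∫ v : ℝ × (Fin dc → ℝ) × (Fin ds → ℝ), q v * (v.2.1 i * v.2.2 j)) = 0 := by
    intro i j
    have e : (fun v : ℝ × (Fin dc → ℝ) × (Fin ds → ℝ) => q v * (v.2.1 i * v.2.2 j))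
        = fun v : ℝ × (Fin dc → ℝ) × (Fin ds → ℝ) =>
          (pYC (v.1, v.2.1) * v.2.1 i) * (pS v.2.2 * v.2.2 j) := by
      funext v; rw [hqv]; ring
    rw [e, factor (fun a => a.2 i) (fun b => b j), hpSz j, mul_zero]
  have hMys : ∀ j : Fin ds,
      (∫ v : ℝ × (Fin dc → ℝ) × (Fin ds → ℝ), q v * (v.1 * v.2.2 j)) = 0 := by
    intro j
    have e : (fun v : ℝ × (Fin dc → ℝ) × (Fin ds → ℝ) => q v * (v.1 * v.2.2 j))
        = fun v : ℝ × (Fin dc → ℝ) × (Fin ds → ℝ) =>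
          (pYC (v.1, v.2.1) * v.1) * (pS v.2.2 * v.2.2 j) := by
      funext v; rw [hqv]; ring
    rw [e, factor (fun a => a.1) (fun b => b j), hpSz j, mul_zero]
  -- block moment matrix
  have hMkl : ∀ k l : Fin dc ⊕ Fin ds,
      (∫ v : ℝ × (Fin dc → ℝ) × (Fin ds → ℝ),
        q v * (Sum.elim v.2.1 v.2.2 k * Sum.elim v.2.1 v.2.2 l))
        = Matrix.fromBlocks Sc 0 0 Ss k l := by
    intro k l
    cases k with
    | inl i =>
      cases l with
      | inl j =>
        simp only [Sum.elim_inl, Matrix.fromBlocks_apply₁₁]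
        exact hMcc i j
      | inr j =>
        simp only [Sum.elim_inl, Sum.elim_inr, Matrix.fromBlocks_apply₁₂, Matrix.zero_apply]
        exact hMcs i j
    | inr j =>
      cases l with
      | inl i =>
        simp only [Sum.elim_inl, Sum.elim_inr, Matrix.fromBlocks_apply₂₁, Matrix.zero_apply]
        have e : (fun v : ℝ × (Fin dc → ℝ) × (Fin ds → ℝ) => q v * (v.2.2 j * v.2.1 i))
            = fun v : ℝ × (Fin dc → ℝ) × (Fin ds → ℝ) => q v * (v.2.1 i * v.2.2 j) := by
          funext v; ring
        rw [e]
        exact hMcs i j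
      | inr j' =>
        simp only [Sum.elim_inr, Matrix.fromBlocks_apply₂₂]
        exact hMss j j'
  have hbilin : ∀ u w : Fin dc ⊕ Fin ds → ℝ,
      (∫ v : ℝ × (Fin dc → ℝ) × (Fin ds → ℝ),
        q v * (dotProduct (Sum.elim v.2.1 v.2.2) u
          * dotProduct (Sum.elim v.2.1 v.2.2) w))
      = dotProduct u ((Matrix.fromBlocks Sc 0 0 Ss).mulVec w) := by
    intro u w
    have e : (fun v : ℝ × (Fin dc → ℝ) × (Fin ds → ℝ) =>
        q v * (dotProduct (Sum.elim v.2.1 v.2.2) u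
          * dotProduct (Sum.elim v.2.1 v.2.2) w))
        = fun v : ℝ × (Fin dc → ℝ) × (Fin ds → ℝ) =>
          ∑ k, ∑ l, (q v * (Sum.elim v.2.1 v.2.2 k * Sum.elim v.2.1 v.2.2 l)) * (u k * w l) := by
      funext v
      rw [dotProduct, dotProduct, Finset.sum_mul_sum, Finset.mul_sum]
      refine Finset.sum_congr rfl fun k _ => ?_
      rw [Finset.mul_sum]
      refine Finset.sum_congr rfl fun l _ => ?_
      ring
    rw [e, integral_finset_sum _ (fun k _ =>
      integrable_finset_sum _ (fun l _ => (hqkl k l).mul_const _))]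
    have h2 : ∀ k : Fin dc ⊕ Fin ds,
        (∫ v : ℝ × (Fin dc → ℝ) × (Fin ds → ℝ),
          ∑ l, (q v * (Sum.elim v.2.1 v.2.2 k * Sum.elim v.2.1 v.2.2 l)) * (u k * w l))
        = ∑ l, Matrix.fromBlocks Sc 0 0 Ss k l * (u k * w l) := by
      intro k
      rw [integral_finset_sum _ (fun l _ => (hqkl k l).mul_const _)]
      refine Finset.sum_congr rfl fun l _ => ?_
      rw [integral_mul_const, hMkl]
    simp only [h2]
    simp only [dotProduct, Matrix.mulVec, Finset.mul_sum]
    refine Finset.sum_congr rfl fun k _ => Finset.sum_congr rfl fun l _ => by ring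
  have hbbk : ∀ k : Fin dc ⊕ Fin ds,
      (∫ v : ℝ × (Fin dc → ℝ) × (Fin ds → ℝ), q v * (v.1 * Sum.elim v.2.1 v.2.2 k))
        = Sum.elim (fun i => ∫ v : ℝ × (Fin dc → ℝ) × (Fin ds → ℝ), p v * v.2.1 i * v.1)
            (0 : (Fin ds → ℝ)) k := by
    intro k
    cases k with
    | inl i => simp only [Sum.elim_inl]; exact hMyc i
    | inr j => simp only [Sum.elim_inr, Pi.zero_apply]; exact hMys j
  have hylin : ∀ u : Fin dc ⊕ Fin ds → ℝ,
      (∫ v : ℝ × (Fin dc → ℝ) × (Fin ds → ℝ),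
        q v * (v.1 * dotProduct (Sum.elim v.2.1 v.2.2) u))
      = dotProduct (Sum.elim
          (fun i => ∫ v : ℝ × (Fin dc → ℝ) × (Fin ds → ℝ), p v * v.2.1 i * v.1)
          (0 : (Fin ds → ℝ))) u := by
    intro u
    have e : (fun v : ℝ × (Fin dc → ℝ) × (Fin ds → ℝ) =>
        q v * (v.1 * dotProduct (Sum.elim v.2.1 v.2.2) u))
        = fun v : ℝ × (Fin dc → ℝ) × (Fin ds → ℝ) =>
          ∑ k, (q v * (v.1 * Sum.elim v.2.1 v.2.2 k)) * u k := by
      funext v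
      rw [dotProduct, Finset.mul_sum, Finset.mul_sum]
      refine Finset.sum_congr rfl fun k _ => ?_
      ring
    rw [e, integral_finset_sum _ (fun k _ => (hqyk k).mul_const _)]
    simp only [dotProduct]
    refine Finset.sum_congr rfl fun k _ => ?_
    rw [integral_mul_const, hbbk]
  -- positivity
  have hsum_elim_eta : ∀ u : Fin dc ⊕ Fin ds → ℝ,
      Sum.elim (fun i => u (Sum.inl i)) (fun j => u (Sum.inr j)) = u := by
    intro u; funext k; cases k <;> rfl
  have hquad : ∀ (uc : Fin dc → ℝ) (us : Fin ds → ℝ),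
      dotProduct (Sum.elim uc us)
        ((Matrix.fromBlocks Sc 0 0 Ss).mulVec (Sum.elim uc us))
      = dotProduct uc (Sc.mulVec uc) + dotProduct us (Ss.mulVec us) := by
    intro uc us
    rw [Matrix.fromBlocks_mulVec]
    simp only [Sum.elim_comp_inl, Sum.elim_comp_inr, Matrix.zero_mulVec, add_zero, zero_add,
      sumElim_dotProduct_sumElim]
  have hqf_nonneg : ∀ u : Fin dc ⊕ Fin ds → ℝ,
      0 ≤ dotProduct u ((Matrix.fromBlocks Sc 0 0 Ss).mulVec u) := by
    intro u
    rw [← hbilin u u]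
    exact integral_nonneg fun v => mul_nonneg (hq0 v) (mul_self_nonneg _)
  have hScT : Sc.transpose = Sc := by
    rw [hSc]
    ext i j
    show (∫ v : ℝ × (Fin dc → ℝ) × (Fin ds → ℝ), p v * v.2.1 j * v.2.1 i)
      = ∫ v : ℝ × (Fin dc → ℝ) × (Fin ds → ℝ), p v * v.2.1 i * v.2.1 j
    have e : (fun v : ℝ × (Fin dc → ℝ) × (Fin ds → ℝ) => p v * v.2.1 j * v.2.1 i)
        = fun v : ℝ × (Fin dc → ℝ) × (Fin ds → ℝ) => p v * v.2.1 i * v.2.1 j := by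
      funext v; ring
    rw [e]
  have hSsT : Ss.transpose = Ss := by
    rw [hSs]
    ext i j
    show (∫ v : ℝ × (Fin dc → ℝ) × (Fin ds → ℝ), p v * v.2.2 j * v.2.2 i)
      = ∫ v : ℝ × (Fin dc → ℝ) × (Fin ds → ℝ), p v * v.2.2 i * v.2.2 j
    have e : (fun v : ℝ × (Fin dc → ℝ) × (Fin ds → ℝ) => p v * v.2.2 j * v.2.2 i)
        = fun v : ℝ × (Fin dc → ℝ) × (Fin ds → ℝ) => p v * v.2.2 i * v.2.2 j := by
      funext v; ring
    rw [e]
  have hSc_psd : Sc.PosSemidef := by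
    rw [Matrix.posSemidef_iff_dotProduct_mulVec]
    constructor
    · show Sc.conjTranspose = Sc
      rw [Matrix.conjTranspose]
      simp only [Matrix.map, star_trivial]
      exact hScT.symm ▸ (by ext i j; rfl)
    · intro x
      have h := hqf_nonneg (Sum.elim x 0)
      rw [hquad] at h
      simp only [Matrix.mulVec_zero, dotProduct_zero, add_zero] at h
      simpa [star_trivial] using h
  have hSs_psd : Ss.PosSemidef := by
    rw [Matrix.posSemidef_iff_dotProduct_mulVec]
    constructor
    · show Ss.conjTranspose = Ss
      rw [Matrix.conjTranspose]
      simp only [Matrix.map, star_trivial]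
      exact hSsT.symm ▸ (by ext i j; rfl)
    · intro x
      have h := hqf_nonneg (Sum.elim 0 x)
      rw [hquad] at h
      simp only [Matrix.mulVec_zero, dotProduct_zero, zero_add] at h
      simpa [star_trivial] using h
  have hqf_zero : ∀ u : Fin dc ⊕ Fin ds → ℝ,
      dotProduct u ((Matrix.fromBlocks Sc 0 0 Ss).mulVec u) = 0 → u = 0 := by
    intro u hu
    have hdecomp := hquad (fun i => u (Sum.inl i)) (fun j => u (Sum.inr j))
    rw [hsum_elim_eta u, hu] at hdecomp
    have hc_nn : 0 ≤ dotProduct (fun i => u (Sum.inl i))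
        (Sc.mulVec fun i => u (Sum.inl i)) := by
      have := hSc_psd.dotProduct_mulVec_nonneg (fun i => u (Sum.inl i))
      simpa [star_trivial] using this
    have hs_nn : 0 ≤ dotProduct (fun j => u (Sum.inr j))
        (Ss.mulVec fun j => u (Sum.inr j)) := by
      have := hSs_psd.dotProduct_mulVec_nonneg (fun j => u (Sum.inr j))
      simpa [star_trivial] using this
    have hc0 : dotProduct (fun i => u (Sum.inl i))
        (Sc.mulVec fun i => u (Sum.inl i)) = 0 := by linarith
    have hs0 : dotProduct (fun j => u (Sum.inr j))
        (Ss.mulVec fun j => u (Sum.inr j)) = 0 := by linarith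
    have h1 : Sc.mulVec (fun i => u (Sum.inl i)) = 0 :=
      (hSc_psd.dotProduct_mulVec_zero_iff _).mp (by simpa [star_trivial] using hc0)
    have h2 : Ss.mulVec (fun j => u (Sum.inr j)) = 0 :=
      (hSs_psd.dotProduct_mulVec_zero_iff _).mp (by simpa [star_trivial] using hs0)
    have huc : (fun i => u (Sum.inl i)) = (0 : Fin dc → ℝ) := by
      have h3 := congrArg Sc⁻¹.mulVec h1
      rwa [Matrix.mulVec_mulVec, Matrix.inv_mul_of_invertible, Matrix.one_mulVec,
        Matrix.mulVec_zero] at h3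
    have hus : (fun j => u (Sum.inr j)) = (0 : Fin ds → ℝ) := by
      have h3 := congrArg Ss⁻¹.mulVec h2
      rwa [Matrix.mulVec_mulVec, Matrix.inv_mul_of_invertible, Matrix.one_mulVec,
        Matrix.mulVec_zero] at h3
    funext k
    cases k with
    | inl i => exact congrFun huc i
    | inr j => exact congrFun hus j
  -- the debiased predictor in latent coordinates
  have hθdot : S.transpose.mulVec θbar
      = Sum.elim (Sc⁻¹.mulVec fun i =>
          ∫ v : ℝ × (Fin dc → ℝ) × (Fin ds → ℝ), p v * v.2.1 i * v.1) 0 := by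
    rw [hθbar]; exact hST _
  have hMw : (Matrix.fromBlocks Sc 0 0 Ss).mulVec
        (Sum.elim (Sc⁻¹.mulVec fun i =>
          ∫ v : ℝ × (Fin dc → ℝ) × (Fin ds → ℝ), p v * v.2.1 i * v.1) 0)
      = Sum.elim (fun i => ∫ v : ℝ × (Fin dc → ℝ) × (Fin ds → ℝ), p v * v.2.1 i * v.1)
          (0 : Fin ds → ℝ) := by
    rw [Matrix.fromBlocks_mulVec]
    simp only [Sum.elim_comp_inl, Sum.elim_comp_inr, Matrix.mulVec_zero, Matrix.zero_mulVec,
      add_zero, zero_add]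
    congr 1
    rw [Matrix.mulVec_mulVec, Matrix.mul_inv_of_invertible, Matrix.one_mulVec]
  have hMT : (Matrix.fromBlocks Sc 0 0 Ss).transpose = Matrix.fromBlocks Sc 0 0 Ss := by
    rw [Matrix.fromBlocks_transpose, Matrix.transpose_zero, Matrix.transpose_zero, hScT, hSsT]
  -- orthogonality
  have horthk : ∀ u' : Fin dc ⊕ Fin ds → ℝ,
      (∫ v : ℝ × (Fin dc → ℝ) × (Fin ds → ℝ),
        q v * ((v.1 - dotProduct (Sum.elim v.2.1 v.2.2) (S.transpose.mulVec θbar))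
          * dotProduct (Sum.elim v.2.1 v.2.2) u')) = 0 := by
    intro u'
    have hsub : (fun v : ℝ × (Fin dc → ℝ) × (Fin ds → ℝ) =>
        q v * ((v.1 - dotProduct (Sum.elim v.2.1 v.2.2) (S.transpose.mulVec θbar))
          * dotProduct (Sum.elim v.2.1 v.2.2) u'))
        = fun v : ℝ × (Fin dc → ℝ) × (Fin ds → ℝ) =>
          q v * (v.1 * dotProduct (Sum.elim v.2.1 v.2.2) u')
          - q v * (dotProduct (Sum.elim v.2.1 v.2.2) (S.transpose.mulVec θbar)
              * dotProduct (Sum.elim v.2.1 v.2.2) u') := by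
      funext v; ring
    rw [hsub, integral_sub (hqyZ u') (hqZZ _ u'), hylin u', hbilin _ u']
    rw [hθdot, Matrix.dotProduct_mulVec, ← Matrix.mulVec_transpose, hMT, hMw]
    rw [sub_self]
  -- split of the loss
  have hptw : ∀ v : ℝ × (Fin dc → ℝ) × (Fin ds → ℝ),
      q v * (v.1 - dotProduct (obsFeat dc ds S v) θ) ^ 2
      = (q v * (v.1 - dotProduct (obsFeat dc ds S v) θbar) ^ 2
        - 2 * (q v * ((v.1 - dotProduct (Sum.elim v.2.1 v.2.2) (S.transpose.mulVec θbar))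
            * dotProduct (Sum.elim v.2.1 v.2.2)
              (S.transpose.mulVec θ - S.transpose.mulVec θbar))))
        + q v * (dotProduct (Sum.elim v.2.1 v.2.2)
              (S.transpose.mulVec θ - S.transpose.mulVec θbar)
            * dotProduct (Sum.elim v.2.1 v.2.2)
              (S.transpose.mulVec θ - S.transpose.mulVec θbar)) := by
    intro v
    rw [hdot θ v, hdot θbar v, dotProduct_sub]
    ring
  have hBint : Integrable (fun v : ℝ × (Fin dc → ℝ) × (Fin ds → ℝ) =>
      q v * ((v.1 - dotProduct (Sum.elim v.2.1 v.2.2) (S.transpose.mulVec θbar))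
        * dotProduct (Sum.elim v.2.1 v.2.2)
          (S.transpose.mulVec θ - S.transpose.mulVec θbar))) := by
    have h := (hqyZ (S.transpose.mulVec θ - S.transpose.mulVec θbar)).sub
      (hqZZ (S.transpose.mulVec θbar) (S.transpose.mulVec θ - S.transpose.mulVec θbar))
    have e : (fun v : ℝ × (Fin dc → ℝ) × (Fin ds → ℝ) =>
        q v * (v.1 * dotProduct (Sum.elim v.2.1 v.2.2)
          (S.transpose.mulVec θ - S.transpose.mulVec θbar))
        - q v * (dotProduct (Sum.elim v.2.1 v.2.2) (S.transpose.mulVec θbar)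
          * dotProduct (Sum.elim v.2.1 v.2.2)
            (S.transpose.mulVec θ - S.transpose.mulVec θbar)))
        = fun v : ℝ × (Fin dc → ℝ) × (Fin ds → ℝ) =>
          q v * ((v.1 - dotProduct (Sum.elim v.2.1 v.2.2) (S.transpose.mulVec θbar))
            * dotProduct (Sum.elim v.2.1 v.2.2)
              (S.transpose.mulVec θ - S.transpose.mulVec θbar)) := by
      funext v; ring
    exact e ▸ h
  have hsplit : (∫ v : ℝ × (Fin dc → ℝ) × (Fin ds → ℝ),
        q v * (v.1 - dotProduct (obsFeat dc ds S v) θ) ^ 2)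
      = ((∫ v : ℝ × (Fin dc → ℝ) × (Fin ds → ℝ),
          q v * (v.1 - dotProduct (obsFeat dc ds S v) θbar) ^ 2)
        - 2 * (∫ v : ℝ × (Fin dc → ℝ) × (Fin ds → ℝ),
          q v * ((v.1 - dotProduct (Sum.elim v.2.1 v.2.2) (S.transpose.mulVec θbar))
            * dotProduct (Sum.elim v.2.1 v.2.2)
              (S.transpose.mulVec θ - S.transpose.mulVec θbar))))
        + ∫ v : ℝ × (Fin dc → ℝ) × (Fin ds → ℝ),
          q v * (dotProduct (Sum.elim v.2.1 v.2.2)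
              (S.transpose.mulVec θ - S.transpose.mulVec θbar)
            * dotProduct (Sum.elim v.2.1 v.2.2)
              (S.transpose.mulVec θ - S.transpose.mulVec θbar)) := by
    have hA := hintL θbar
    have hB2 : Integrable (fun v : ℝ × (Fin dc → ℝ) × (Fin ds → ℝ) =>
        2 * (q v * ((v.1 - dotProduct (Sum.elim v.2.1 v.2.2) (S.transpose.mulVec θbar))
          * dotProduct (Sum.elim v.2.1 v.2.2)
            (S.transpose.mulVec θ - S.transpose.mulVec θbar)))) := hBint.const_mul 2
    have hC := hqZsq (S.transpose.mulVec θ - S.transpose.mulVec θbar)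
    have hAB : Integrable (fun v : ℝ × (Fin dc → ℝ) × (Fin ds → ℝ) =>
        q v * (v.1 - dotProduct (obsFeat dc ds S v) θbar) ^ 2
        - 2 * (q v * ((v.1 - dotProduct (Sum.elim v.2.1 v.2.2) (S.transpose.mulVec θbar))
          * dotProduct (Sum.elim v.2.1 v.2.2)
            (S.transpose.mulVec θ - S.transpose.mulVec θbar)))) := hA.sub hB2
    rw [show (fun v : ℝ × (Fin dc → ℝ) × (Fin ds → ℝ) =>
        q v * (v.1 - dotProduct (obsFeat dc ds S v) θ) ^ 2) = _ from funext hptw]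
    rw [integral_add hAB hC, integral_sub hA hB2, integral_const_mul]
  have hCnn : 0 ≤ ∫ v : ℝ × (Fin dc → ℝ) × (Fin ds → ℝ),
      q v * (dotProduct (Sum.elim v.2.1 v.2.2)
          (S.transpose.mulVec θ - S.transpose.mulVec θbar)
        * dotProduct (Sum.elim v.2.1 v.2.2)
          (S.transpose.mulVec θ - S.transpose.mulVec θbar)) :=
    integral_nonneg fun v => mul_nonneg (hq0 v) (mul_self_nonneg _)
  constructor
  · rw [hsplit, horthk]
    linarith
  · intro heq
    rw [hsplit, horthk] at heq
    have hC0 : (∫ v : ℝ × (Fin dc → ℝ) × (Fin ds → ℝ),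
        q v * (dotProduct (Sum.elim v.2.1 v.2.2)
            (S.transpose.mulVec θ - S.transpose.mulVec θbar)
          * dotProduct (Sum.elim v.2.1 v.2.2)
            (S.transpose.mulVec θ - S.transpose.mulVec θbar))) = 0 := by linarith
    have hu0 : S.transpose.mulVec θ - S.transpose.mulVec θbar = 0 := by
      refine hqf_zero _ ?_
      rw [← hbilin _ _, hC0]
    have heq2 : S.transpose.mulVec θ = S.transpose.mulVec θbar := sub_eq_zero.mp hu0
    calc θ = T.transpose.mulVec (S.transpose.mulVec θ) := (hTS' θ).symm
      _ = T.transpose.mulVec (S.transpose.mulVec θbar) := by rw [heq2]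
      _ = θbar := hTS' θbar
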